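/- Let $Q, P$ be symmetric positive definite matrices (of sizes $n$ and $m$), $N$ an $n\times m$ matrix, and suppose $\mathcal{N} := Q^{-1/2} N P^{-1/2}$ satisfies $\mathcal{N}\mathcal{N}^{\top} \le (1-\delta_1) I$ and $\mathcal{N}^{\top}\mathcal{N} \le (1-\delta_1) I$ for some $\delta_1 \in (0,1]$. Then for all vectors $x \in \mathbb{R}^n$ and $v \in \mathbb{R}^m$: $2 x^{\top} Q x + 2 v^{\top} P v + 4 v^{\top} N^{\top} x \ge \delta_1 \big( x^{\top} Q x + v^{\top} P v \big) \ge \delta_1 \min\{\lambda_{\min}(Q), \lambda_{\min}(P)\} (\|x\|^2 + \|v\|^2)$. -/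

import Mathlib

open Matrix

/-- The smallest eigenvalue of a real symmetric matrix. -/
noncomputable def lamMin {n : Type*} [Fintype n] [DecidableEq n] {A : Matrix n n ℝ}
    (hA : A.IsHermitian) : ℝ := ⨅ i, hA.eigenvalues i

section

open scoped ComplexOrder

/-- The positive semidefinite square root of a positive semidefinite matrix
(as defined in Mathlib of December 2024, since removed). -/
noncomputable def Matrix.PosSemidef.sqrt {n : Type*} {𝕜 : Type*} [RCLike 𝕜] [Fintype n]
    [DecidableEq n] {A : Matrix n n 𝕜} (hA : PosSemidef A) : Matrix n n 𝕜 :=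
  hA.1.eigenvectorUnitary.1 * diagonal ((↑) ∘ (√·) ∘ hA.1.eigenvalues) *
    (star hA.1.eigenvectorUnitary : Matrix n n 𝕜)

end

lemma sqrt_transpose_real {n : Type*} [Fintype n] [DecidableEq n] {A : Matrix n n ℝ}
    (hA : PosSemidef A) : (PosSemidef.sqrt hA)ᵀ = PosSemidef.sqrt hA := by
  simp [PosSemidef.sqrt, transpose_mul, star_eq_conjTranspose,
    conjTranspose_eq_transpose_of_trivial, Matrix.mul_assoc]

lemma sqrt_mul_self_real {n : Type*} [Fintype n] [DecidableEq n] {A : Matrix n n ℝ}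
    (hA : PosSemidef A) : PosSemidef.sqrt hA * PosSemidef.sqrt hA = A := by
  have hU : (star hA.1.eigenvectorUnitary : Matrix n n ℝ) * hA.1.eigenvectorUnitary.1 = 1 :=
    hA.1.eigenvectorUnitary.2.1
  have hD : diagonal ((RCLike.ofReal : ℝ → ℝ) ∘ (√·) ∘ hA.1.eigenvalues) *
      diagonal ((RCLike.ofReal : ℝ → ℝ) ∘ (√·) ∘ hA.1.eigenvalues) =
      diagonal (RCLike.ofReal ∘ hA.1.eigenvalues) := by
    rw [diagonal_mul_diagonal]; congr 1; funext i
    simp [Real.mul_self_sqrt (hA.eigenvalues_nonneg i)]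
  conv_rhs => rw [hA.1.spectral_theorem, Unitary.conjStarAlgAut_apply]
  unfold PosSemidef.sqrt
  calc _ = (hA.1.eigenvectorUnitary.1 * (diagonal ((RCLike.ofReal : ℝ → ℝ) ∘ (√·) ∘ hA.1.eigenvalues) *
      ((star hA.1.eigenvectorUnitary : Matrix n n ℝ) * hA.1.eigenvectorUnitary.1) *
      diagonal ((RCLike.ofReal : ℝ → ℝ) ∘ (√·) ∘ hA.1.eigenvalues))) *
      (star hA.1.eigenvectorUnitary : Matrix n n ℝ) := by simp only [Matrix.mul_assoc]
    _ = _ := by rw [hU, Matrix.mul_one, hD]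

lemma dot_self_nonneg {n : Type*} [Fintype n] (x : n → ℝ) : 0 ≤ x ⬝ᵥ x :=
  Finset.sum_nonneg fun i _ => mul_self_nonneg _

lemma dot_MMt {n m : Type*} [Fintype n] [Fintype m] (M : Matrix n m ℝ) (x : n → ℝ) :
    x ⬝ᵥ (M * Mᵀ) *ᵥ x = (Mᵀ *ᵥ x) ⬝ᵥ (Mᵀ *ᵥ x) := by
  rw [← mulVec_mulVec, dotProduct_mulVec, mulVec_transpose]

lemma rayleigh_lower {n : Type*} [Fintype n] [DecidableEq n] [Nonempty n]
    {A : Matrix n n ℝ} (hA : A.IsHermitian) (x : n → ℝ) :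
    lamMin hA * (x ⬝ᵥ x) ≤ x ⬝ᵥ A *ᵥ x := by
  classical
  set U : Matrix n n ℝ := (hA.eigenvectorUnitary : Matrix n n ℝ) with hU
  have hUt : Uᴴ = Uᵀ := by ext i j; simp [conjTranspose_apply]
  set y : n → ℝ := Uᵀ *ᵥ x with hy
  have hxAx : x ⬝ᵥ A *ᵥ x = ∑ i, hA.eigenvalues i * (y i)^2 := by
    conv_lhs => rw [hA.spectral_theorem]
    rw [Unitary.conjStarAlgAut_apply, star_eq_conjTranspose, ← hU, hUt, ← mulVec_mulVec, ← mulVec_mulVec,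
      dotProduct_mulVec, ← mulVec_transpose, ← hy]
    simp only [dotProduct, mulVec_diagonal, sq, RCLike.ofReal_real_eq_id,
      Function.comp_apply, id_eq]
    exact Finset.sum_congr rfl fun i _ => by ring
  have hUUt : U * Uᵀ = 1 := by
    rw [← hUt]; exact hA.eigenvectorUnitary.2.2
  have hxx : x ⬝ᵥ x = ∑ i, (y i)^2 := by
    have h := dot_MMt U x
    rw [hUUt] at h
    simp only [one_mulVec] at h
    rw [h, ← hy]
    simp [dotProduct, sq]
  rw [hxAx, hxx, Finset.mul_sum]
  apply Finset.sum_le_sum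
  intro i _
  have h1 : lamMin hA ≤ hA.eigenvalues i := ciInf_le (Finite.bddBelow_range _) i
  nlinarith [sq_nonneg (y i)]

/-- Pointwise coercivity: if `𝒩 = Q^{-1/2} N P^{-1/2}` satisfies `𝒩𝒩ᵀ ≤ (1-δ₁) I` and
`𝒩ᵀ𝒩 ≤ (1-δ₁) I`, then
`2 xᵀQx + 2 vᵀPv + 4 vᵀNᵀx ≥ δ₁ (xᵀQx + vᵀPv) ≥ δ₁ min(λmin Q, λmin P)(‖x‖² + ‖v‖²)`. -/
theorem coercivity_estimate {n m : Type*} [Fintype n] [DecidableEq n] [Nonempty n]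
    [Fintype m] [DecidableEq m] [Nonempty m]
    (Q : Matrix n n ℝ) (P : Matrix m m ℝ) (N : Matrix n m ℝ) (δ1 : ℝ)
    (hQ : Q.PosDef) (hP : P.PosDef) (hδ1 : 0 < δ1) (hδ1' : δ1 ≤ 1)
    (h1 : ((1 - δ1) • (1 : Matrix n n ℝ) -
        ((PosSemidef.sqrt hQ.posSemidef)⁻¹ * N * (PosSemidef.sqrt hP.posSemidef)⁻¹) *
          ((PosSemidef.sqrt hQ.posSemidef)⁻¹ * N * (PosSemidef.sqrt hP.posSemidef)⁻¹)ᵀ).PosSemidef)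
    (h2 : ((1 - δ1) • (1 : Matrix m m ℝ) -
        ((PosSemidef.sqrt hQ.posSemidef)⁻¹ * N * (PosSemidef.sqrt hP.posSemidef)⁻¹)ᵀ *
          ((PosSemidef.sqrt hQ.posSemidef)⁻¹ * N * (PosSemidef.sqrt hP.posSemidef)⁻¹)).PosSemidef) :
    ∀ (x : n → ℝ) (v : m → ℝ),
      δ1 * (x ⬝ᵥ Q.mulVec x + v ⬝ᵥ P.mulVec v) ≤
        2 * (x ⬝ᵥ Q.mulVec x) + 2 * (v ⬝ᵥ P.mulVec v) + 4 * (v ⬝ᵥ Nᵀ.mulVec x) ∧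
      δ1 * min (lamMin hQ.1) (lamMin hP.1) * ((∑ i, x i ^ 2) + ∑ j, v j ^ 2) ≤
        δ1 * (x ⬝ᵥ Q.mulVec x + v ⬝ᵥ P.mulVec v) := by
  classical
  intro x v
  set S := PosSemidef.sqrt hQ.posSemidef with hS
  set T := PosSemidef.sqrt hP.posSemidef with hT
  have hSsym : Sᵀ = S := sqrt_transpose_real hQ.posSemidef
  have hTsym : Tᵀ = T := sqrt_transpose_real hP.posSemidef
  have hSS : S * S = Q := sqrt_mul_self_real hQ.posSemidef
  have hTT : T * T = P := sqrt_mul_self_real hP.posSemidef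
  have hSunit : IsUnit S.det := by
    have : S.det * S.det = Q.det := by rw [← det_mul, hSS]
    have hQd := hQ.det_pos
    refine isUnit_iff_ne_zero.2 fun h => ?_
    rw [h, mul_zero] at this; rw [← this] at hQd; exact lt_irrefl _ hQd
  have hTunit : IsUnit T.det := by
    have : T.det * T.det = P.det := by rw [← det_mul, hTT]
    have hPd := hP.det_pos
    refine isUnit_iff_ne_zero.2 fun h => ?_
    rw [h, mul_zero] at this; rw [← this] at hPd; exact lt_irrefl _ hPd
  have hSinv : S⁻¹ * S = 1 := nonsing_inv_mul S hSunit
  have hSinv' : S * S⁻¹ = 1 := mul_nonsing_inv S hSunit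
  have hTinv' : T * T⁻¹ = 1 := mul_nonsing_inv T hTunit
  have hSinvT : (S⁻¹)ᵀ = S⁻¹ := by rw [transpose_nonsing_inv, hSsym]
  have hTinvT : (T⁻¹)ᵀ = T⁻¹ := by rw [transpose_nonsing_inv, hTsym]
  set 𝒩 : Matrix n m ℝ := S⁻¹ * N * T⁻¹ with h𝒩
  set a : n → ℝ := S *ᵥ x with ha
  set b : m → ℝ := T *ᵥ v with hb
  set w : m → ℝ := 𝒩ᵀ *ᵥ a with hw
  -- quadratic forms
  have hQx : x ⬝ᵥ Q.mulVec x = a ⬝ᵥ a := by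
    rw [← hSS, ← mulVec_mulVec, dotProduct_mulVec, ← mulVec_transpose, hSsym, ha]
  have hPv : v ⬝ᵥ P.mulVec v = b ⬝ᵥ b := by
    rw [← hTT, ← mulVec_mulVec, dotProduct_mulVec, ← mulVec_transpose, hTsym, hb]
  have hQx0 : 0 ≤ a ⬝ᵥ a := dot_self_nonneg a
  have hPv0 : 0 ≤ b ⬝ᵥ b := dot_self_nonneg b
  -- w = T⁻¹ Nᵀ x
  have hmat : 𝒩ᵀ * S = T⁻¹ * Nᵀ := by
    rw [h𝒩]
    simp only [transpose_mul, hSinvT, hTinvT, Matrix.mul_assoc, hSinv, Matrix.mul_one]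
  have hw' : w = (T⁻¹ * Nᵀ) *ᵥ x := by
    rw [hw, ha, mulVec_mulVec, hmat]
  -- cross term
  have hcross : v ⬝ᵥ Nᵀ.mulVec x = w ⬝ᵥ b := by
    have key : ((T⁻¹ * Nᵀ) *ᵥ x) ⬝ᵥ (T *ᵥ v) = (Nᵀ *ᵥ x) ⬝ᵥ v := by
      rw [dotProduct_mulVec, ← mulVec_transpose, hTsym, mulVec_mulVec,
        ← Matrix.mul_assoc, hTinv', Matrix.one_mul]
    rw [hw', hb, key, dotProduct_comm]
  -- from h1 : ‖w‖² ≤ (1-δ1) ‖a‖²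
  have hbound : w ⬝ᵥ w ≤ (1 - δ1) * (a ⬝ᵥ a) := by
    have h := h1.dotProduct_mulVec_nonneg a
    simp only [star_trivial, sub_mulVec, dotProduct_sub, smul_mulVec, one_mulVec,
      dotProduct_smul, smul_eq_mul, dot_MMt, RCLike.re_to_real] at h
    rw [← hw] at h
    linarith
  -- Cauchy-Schwarz
  have hCS : (w ⬝ᵥ b) ^ 2 ≤ (w ⬝ᵥ w) * (b ⬝ᵥ b) := by
    have := Finset.sum_mul_sq_le_sq_mul_sq Finset.univ w b
    simpa [dotProduct, sq] using this
  have hC2 : (w ⬝ᵥ b) ^ 2 ≤ (1 - δ1) * (a ⬝ᵥ a) * (b ⬝ᵥ b) :=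
    hCS.trans (mul_le_mul_of_nonneg_right hbound hPv0)
  constructor
  · rw [hQx, hPv, hcross]
    set A := a ⬝ᵥ a
    set B := b ⬝ᵥ b
    set C := w ⬝ᵥ b
    have hkey : 16 * C ^ 2 ≤ (2 - δ1) ^ 2 * (A + B) ^ 2 - 4 * δ1 ^ 2 * (A * B) := by
      nlinarith [hC2, mul_nonneg hQx0 hPv0, mul_nonneg (mul_nonneg hQx0 hPv0) (sq_nonneg (2 - δ1)),
        mul_nonneg (sq_nonneg (A - B)) (sq_nonneg (2 - δ1))]
    have hM : 0 ≤ (2 - δ1) * (A + B) :=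
      mul_nonneg (by linarith) (by linarith)
    nlinarith [hkey, mul_nonneg hQx0 hPv0, hM, sq_nonneg ((2 - δ1) * (A + B) + 4 * C)]
  · have hmin : min (lamMin hQ.1) (lamMin hP.1) ≤ lamMin hQ.1 := min_le_left _ _
    have hmin' : min (lamMin hQ.1) (lamMin hP.1) ≤ lamMin hP.1 := min_le_right _ _
    have hx2 : (∑ i, x i ^ 2) = x ⬝ᵥ x := by simp [dotProduct, sq]
    have hv2 : (∑ j, v j ^ 2) = v ⬝ᵥ v := by simp [dotProduct, sq]
    have hxx0 : 0 ≤ x ⬝ᵥ x := dot_self_nonneg x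
    have hvv0 : 0 ≤ v ⬝ᵥ v := dot_self_nonneg v
    have hQr : lamMin hQ.1 * (x ⬝ᵥ x) ≤ x ⬝ᵥ Q.mulVec x := rayleigh_lower hQ.1 x
    have hPr : lamMin hP.1 * (v ⬝ᵥ v) ≤ v ⬝ᵥ P.mulVec v := rayleigh_lower hP.1 v
    rw [hx2, hv2]
    have h3 : min (lamMin hQ.1) (lamMin hP.1) * (x ⬝ᵥ x + v ⬝ᵥ v) ≤
        x ⬝ᵥ Q.mulVec x + v ⬝ᵥ P.mulVec v := by
      have t1 : min (lamMin hQ.1) (lamMin hP.1) * (x ⬝ᵥ x) ≤ lamMin hQ.1 * (x ⬝ᵥ x) :=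
        mul_le_mul_of_nonneg_right hmin hxx0
      have t2 : min (lamMin hQ.1) (lamMin hP.1) * (v ⬝ᵥ v) ≤ lamMin hP.1 * (v ⬝ᵥ v) :=
        mul_le_mul_of_nonneg_right hmin' hvv0
      rw [mul_add]
      linarith
    rw [mul_assoc]
    exact mul_le_mul_of_nonneg_left h3 hδ1.le
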